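/- The binary icosahedral group G has exactly 9 conjugacy classes. -/

import Mathlib

noncomputable section

open Quaternion

/-- The golden ratio `τ = (1+√5)/2`. -/
def τ : ℝ := (1 + Real.sqrt 5) / 2

/-- The simple root `a₁ = j` of `H₃`, as a pure unit quaternion. -/
def a₁ : ℍ[ℝ] := ⟨0, 0, 1, 0⟩

/-- The simple root `a₂ = -½((τ-1)i + j + τk)` of `H₃`, as a pure unit quaternion. -/
def a₂ : ℍ[ℝ] := ⟨0, -((τ - 1) / 2), -(1 / 2), -(τ / 2)⟩

/-- The simple root `a₃ = k` of `H₃`, as a pure unit quaternion. -/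
def a₃ : ℍ[ℝ] := ⟨0, 0, 0, 1⟩

/-- The subgroup of `ℍˣ` generated by the two spinors `a₁a₂` and `a₂a₃`
(the binary icosahedral group `2I`). -/
def G2I : Subgroup (ℍ[ℝ])ˣ :=
  Subgroup.closure {u : (ℍ[ℝ])ˣ | (u : ℍ[ℝ]) = a₁ * a₂ ∨ (u : ℍ[ℝ]) = a₂ * a₃}

/-! ### Auxiliary setup: exact arithmetic in `ℤ√5` -/

abbrev A : Type := Zsqrtd 5

instance : DecidableEq (ℍ[A]) := fun a b =>
  decidable_of_iff (a.re = b.re ∧ a.imI = b.imI ∧ a.imJ = b.imJ ∧ a.imK = b.imK)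
    (QuaternionAlgebra.ext_iff).symm

def φ : A →+* ℝ := Zsqrtd.lift ⟨Real.sqrt 5, by
  rw [Real.mul_self_sqrt (by norm_num)]; norm_num⟩

lemma φ_inj : Function.Injective φ := by
  apply Zsqrtd.lift_injective
  intro n h
  have h1 : n ≤ 3 ∧ -3 ≤ n := by constructor <;> nlinarith
  obtain ⟨h2, h3⟩ := h1
  interval_cases n <;> omega

def ψ : ℍ[A] →+* ℍ[ℝ] where
  toFun X := ⟨φ X.re, φ X.imI, φ X.imJ, φ X.imK⟩
  map_one' := by ext <;> simp
  map_zero' := by ext <;> simp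
  map_mul' X Y := by
    ext
    · simp; erw [Quaternion.re_mul]
    · simp; erw [Quaternion.imI_mul]
    · simp; erw [Quaternion.imJ_mul]
    · simp; erw [Quaternion.imK_mul]
  map_add' X Y := by ext <;> simp <;> rfl

lemma psi_re (X : ℍ[A]) : (ψ X).re = φ X.re := rfl
lemma psi_imI (X : ℍ[A]) : (ψ X).imI = φ X.imI := rfl
lemma psi_imJ (X : ℍ[A]) : (ψ X).imJ = φ X.imJ := rfl
lemma psi_imK (X : ℍ[A]) : (ψ X).imK = φ X.imK := rfl

def qval (X : ℍ[A]) : ℍ[ℝ] := (4:ℝ)⁻¹ • ψ X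

def q0 : ℍ[A] := ⟨⟨0,0⟩,⟨0,0⟩,⟨0,0⟩,⟨0,0⟩⟩
def q4 : ℍ[A] := ⟨⟨4,0⟩,⟨0,0⟩,⟨0,0⟩,⟨0,0⟩⟩
def q16 : ℍ[A] := ⟨⟨16,0⟩,⟨0,0⟩,⟨0,0⟩,⟨0,0⟩⟩
def cstar (X : ℍ[A]) : ℍ[A] := ⟨X.re, -X.imI, -X.imJ, -X.imK⟩

def G1q : ℍ[A] := ⟨⟨2,0⟩,⟨-1,-1⟩,⟨0,0⟩,⟨-1,1⟩⟩
def G2q : ℍ[A] := ⟨⟨1,1⟩,⟨-2,0⟩,⟨-1,1⟩,⟨0,0⟩⟩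

lemma val_g1 : a₁ * a₂ = qval G1q := by
  ext <;> simp only [Quaternion.re_mul, Quaternion.imI_mul, Quaternion.imJ_mul, Quaternion.imK_mul, qval, Quaternion.re_smul, Quaternion.imI_smul, Quaternion.imJ_smul, Quaternion.imK_smul, psi_re, psi_imI, psi_imJ, psi_imK] <;> simp [a₁, a₂, a₃, qval, G1q, φ, τ, Quaternion.re_mul, Quaternion.imI_mul,
    Quaternion.imJ_mul, Quaternion.imK_mul] <;> ring

lemma val_g2 : a₂ * a₃ = qval G2q := by
  ext <;> simp only [Quaternion.re_mul, Quaternion.imI_mul, Quaternion.imJ_mul, Quaternion.imK_mul, qval, Quaternion.re_smul, Quaternion.imI_smul, Quaternion.imJ_smul, Quaternion.imK_smul, psi_re, psi_imI, psi_imJ, psi_imK] <;> simp [a₁, a₂, a₃, qval, G2q, φ, τ, Quaternion.re_mul, Quaternion.imI_mul,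
    Quaternion.imJ_mul, Quaternion.imK_mul] <;> ring

lemma qval_mul (P Q : ℍ[A]) : qval P * qval Q = (16:ℝ)⁻¹ • ψ (P * Q) := by
  rw [qval, qval, map_mul, smul_mul_smul_comm]
  norm_num

lemma psi_q4 : ψ q4 = (4:ℝ) • (1 : ℍ[ℝ]) := by
  ext <;> simp only [psi_re, psi_imI, psi_imJ, psi_imK] <;> simp [q4, φ]

lemma qval_mul_eq {P Q Z : ℍ[A]} (h : P * Q = q4 * Z) : qval P * qval Q = qval Z := by
  rw [qval_mul, h, map_mul, psi_q4, smul_mul_assoc, one_mul, smul_smul, qval]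
  norm_num

lemma qval_mul_eq₂ {P Q X C : ℍ[A]} (h : P * Q = X * C) :
    qval P * qval Q = qval X * qval C := by rw [qval_mul, qval_mul, h]

lemma qval_one : qval q4 = 1 := by
  rw [qval, psi_q4, smul_smul]; norm_num

lemma qval_re (X : ℍ[A]) : (qval X).re = (4:ℝ)⁻¹ * φ X.re := rfl

lemma re_comm (x y : ℍ[ℝ]) : (x * y).re = (y * x).re := by
  simp [Quaternion.re_mul]; ring

/-! ### The 120 elements of 2I, scaled by 4, with coordinates in ℤ√5 -/

def mk8 (a b c d e f g h : ℤ) : ℍ[A] := ⟨⟨a,b⟩,⟨c,d⟩,⟨e,f⟩,⟨g,h⟩⟩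
def L : List (ℍ[A]) := [mk8 2 0 (-1) (-1) 0 0 (-1) 1,
 mk8 1 1 (-2) 0 (-1) 1 0 0,
 mk8 (-2) 0 (-1) (-1) 0 0 (-1) 1,
 mk8 0 0 (-4) 0 0 0 0 0,
 mk8 0 0 (-1) (-1) (-1) 1 2 0,
 mk8 (-1) 1 (-1) (-1) 2 0 0 0,
 mk8 (-4) 0 0 0 0 0 0 0,
 mk8 (-1) (-1) (-2) 0 1 (-1) 0 0,
 mk8 (-1) (-1) (-2) 0 (-1) 1 0 0,
 mk8 (-1) (-1) 1 (-1) 0 0 2 0,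
 mk8 (-2) 0 (-1) (-1) 0 0 1 (-1),
 mk8 (-2) 0 (-2) 0 2 0 2 0,
 mk8 1 (-1) (-1) (-1) 2 0 0 0,
 mk8 (-2) 0 1 1 0 0 1 (-1),
 mk8 (-1) (-1) 2 0 1 (-1) 0 0,
 mk8 (-1) (-1) 2 0 (-1) 1 0 0,
 mk8 (-1) (-1) (-1) 1 0 0 (-2) 0,
 mk8 (-1) (-1) 0 0 (-2) 0 1 (-1),
 mk8 (-1) (-1) (-1) 1 0 0 2 0,
 mk8 (-1) (-1) 0 0 2 0 1 (-1),
 mk8 (-1) (-1) 0 0 (-2) 0 (-1) 1,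
 mk8 (-1) (-1) 1 (-1) 0 0 (-2) 0,
 mk8 (-1) (-1) 0 0 2 0 (-1) 1,
 mk8 2 0 1 1 0 0 1 (-1),
 mk8 0 0 4 0 0 0 0 0,
 mk8 0 0 1 1 1 (-1) (-2) 0,
 mk8 0 0 1 1 (-1) 1 (-2) 0,
 mk8 1 (-1) 1 1 (-2) 0 0 0,
 mk8 1 (-1) 2 0 0 0 (-1) (-1),
 mk8 1 (-1) 1 1 2 0 0 0,
 mk8 (-2) 0 1 1 0 0 (-1) 1,
 mk8 (-2) 0 2 0 (-2) 0 (-2) 0,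
 mk8 (-2) 0 2 0 2 0 (-2) 0,
 mk8 (-2) 0 (-1) 1 (-1) (-1) 0 0,
 mk8 (-2) 0 2 0 (-2) 0 2 0,
 mk8 4 0 0 0 0 0 0 0,
 mk8 1 1 2 0 (-1) 1 0 0,
 mk8 1 1 (-1) 1 0 0 (-2) 0,
 mk8 1 1 2 0 1 (-1) 0 0,
 mk8 2 0 1 1 0 0 (-1) 1,
 mk8 2 0 2 0 2 0 (-2) 0,
 mk8 2 0 2 0 (-2) 0 (-2) 0,
 mk8 (-1) 1 1 1 2 0 0 0,
 mk8 (-1) 1 2 0 0 0 (-1) (-1),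
 mk8 (-1) 1 1 1 (-2) 0 0 0,
 mk8 0 0 1 1 1 (-1) 2 0,
 mk8 0 0 1 1 (-1) 1 2 0,
 mk8 0 0 2 0 (-1) (-1) 1 (-1),
 mk8 0 0 (-1) 1 (-2) 0 (-1) (-1),
 mk8 0 0 2 0 (-1) (-1) (-1) 1,
 mk8 1 1 (-2) 0 1 (-1) 0 0,
 mk8 1 1 1 (-1) 0 0 2 0,
 mk8 1 1 0 0 2 0 (-1) 1,
 mk8 1 1 1 (-1) 0 0 (-2) 0,
 mk8 1 1 0 0 (-2) 0 (-1) 1,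
 mk8 1 1 0 0 2 0 1 (-1),
 mk8 1 1 (-1) 1 0 0 2 0,
 mk8 1 1 0 0 (-2) 0 1 (-1),
 mk8 2 0 2 0 2 0 2 0,
 mk8 2 0 (-1) 1 1 1 0 0,
 mk8 2 0 (-1) 1 (-1) (-1) 0 0,
 mk8 2 0 2 0 (-2) 0 2 0,
 mk8 2 0 0 0 (-1) 1 (-1) (-1),
 mk8 2 0 0 0 1 (-1) (-1) (-1),
 mk8 (-1) 1 2 0 0 0 1 1,
 mk8 (-1) 1 0 0 (-1) (-1) (-2) 0,
 mk8 0 0 (-1) (-1) 1 (-1) 2 0,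
 mk8 (-1) 1 (-2) 0 0 0 1 1,
 mk8 (-1) 1 (-1) (-1) (-2) 0 0 0,
 mk8 2 0 (-1) (-1) 0 0 1 (-1),
 mk8 2 0 (-2) 0 2 0 2 0,
 mk8 2 0 (-2) 0 (-2) 0 2 0,
 mk8 2 0 1 (-1) 1 1 0 0,
 mk8 2 0 (-2) 0 2 0 (-2) 0,
 mk8 2 0 (-2) 0 (-2) 0 (-2) 0,
 mk8 2 0 1 (-1) (-1) (-1) 0 0,
 mk8 2 0 0 0 (-1) 1 1 1,
 mk8 2 0 0 0 1 (-1) 1 1,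
 mk8 (-1) 1 0 0 1 1 2 0,
 mk8 (-1) 1 (-2) 0 0 0 (-1) (-1),
 mk8 (-1) 1 0 0 (-1) (-1) 2 0,
 mk8 (-1) 1 0 0 1 1 (-2) 0,
 mk8 (-2) 0 (-2) 0 (-2) 0 2 0,
 mk8 1 (-1) (-1) (-1) (-2) 0 0 0,
 mk8 1 (-1) (-2) 0 0 0 1 1,
 mk8 0 0 (-1) (-1) (-1) 1 (-2) 0,
 mk8 0 0 1 (-1) 2 0 1 1,
 mk8 0 0 (-1) (-1) 1 (-1) (-2) 0,
 mk8 0 0 (-2) 0 1 1 (-1) 1,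
 mk8 0 0 (-2) 0 (-1) (-1) (-1) 1,
 mk8 0 0 1 (-1) (-2) 0 1 1,
 mk8 0 0 (-2) 0 1 1 1 (-1),
 mk8 0 0 0 0 0 0 4 0,
 mk8 0 0 (-2) 0 (-1) (-1) 1 (-1),
 mk8 0 0 0 0 4 0 0 0,
 mk8 0 0 1 (-1) 2 0 (-1) (-1),
 mk8 (-2) 0 (-2) 0 (-2) 0 (-2) 0,
 mk8 (-2) 0 0 0 1 (-1) 1 1,
 mk8 (-2) 0 1 (-1) (-1) (-1) 0 0,
 mk8 (-2) 0 0 0 (-1) 1 1 1,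
 mk8 (-2) 0 1 (-1) 1 1 0 0,
 mk8 (-2) 0 (-2) 0 2 0 (-2) 0,
 mk8 1 (-1) (-2) 0 0 0 (-1) (-1),
 mk8 1 (-1) 0 0 (-1) (-1) 2 0,
 mk8 1 (-1) 0 0 1 1 2 0,
 mk8 0 0 1 (-1) (-2) 0 (-1) (-1),
 mk8 0 0 (-1) 1 2 0 1 1,
 mk8 1 (-1) 0 0 1 1 (-2) 0,
 mk8 (-2) 0 2 0 2 0 2 0,
 mk8 (-2) 0 (-1) 1 1 1 0 0,
 mk8 (-2) 0 0 0 1 (-1) (-1) (-1),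
 mk8 (-2) 0 0 0 (-1) 1 (-1) (-1),
 mk8 1 (-1) 0 0 (-1) (-1) (-2) 0,
 mk8 1 (-1) 2 0 0 0 1 1,
 mk8 0 0 0 0 (-4) 0 0 0,
 mk8 0 0 (-1) 1 (-2) 0 1 1,
 mk8 0 0 0 0 0 0 (-4) 0,
 mk8 0 0 2 0 1 1 (-1) 1,
 mk8 0 0 2 0 1 1 1 (-1),
 mk8 0 0 (-1) 1 2 0 (-1) (-1)]
def Rs : List (ℍ[A]) := [mk8 4 0 0 0 0 0 0 0, mk8 (-4) 0 0 0 0 0 0 0, mk8 0 0 (-4) 0 0 0 0 0, mk8 2 0 (-1) (-1) 0 0 (-1) 1, mk8 (-2) 0 (-1) (-1) 0 0 (-1) 1, mk8 1 1 (-2) 0 (-1) 1 0 0, mk8 (-1) (-1) (-2) 0 1 (-1) 0 0, mk8 (-1) 1 (-1) (-1) 2 0 0 0, mk8 1 (-1) (-1) (-1) 2 0 0 0]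
def Cs : List (ℍ[A]) := [mk8 2 0 (-1) (-1) 0 0 (-1) 1,
 mk8 1 1 (-2) 0 (-1) 1 0 0,
 mk8 2 0 (-1) (-1) 0 0 (-1) 1,
 mk8 0 0 (-4) 0 0 0 0 0,
 mk8 1 1 (-2) 0 (-1) 1 0 0,
 mk8 1 1 (-2) 0 (-1) 1 0 0,
 mk8 2 0 (-1) (-1) 0 0 (-1) 1,
 mk8 (-4) 0 0 0 0 0 0 0,
 mk8 (-2) 0 (-1) (-1) 0 0 (-1) 1,
 mk8 2 0 (-1) (-1) 0 0 (-1) 1,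
 mk8 0 0 (-4) 0 0 0 0 0,
 mk8 1 1 (-2) 0 (-1) 1 0 0,
 mk8 1 1 (-2) 0 (-1) 1 0 0,
 mk8 0 0 0 0 4 0 0 0,
 mk8 2 0 0 0 (-1) 1 1 1,
 mk8 0 0 2 0 (-1) (-1) 1 (-1),
 mk8 2 0 (-1) 1 (-1) (-1) 0 0,
 mk8 (-1) (-1) 0 0 2 0 1 (-1),
 mk8 1 (-1) 2 0 0 0 (-1) (-1),
 mk8 (-2) 0 (-2) 0 2 0 2 0,
 mk8 (-1) (-1) (-1) 1 0 0 (-2) 0,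
 mk8 (-1) (-1) (-2) 0 (-1) 1 0 0,
 mk8 0 0 (-1) (-1) (-1) 1 2 0,
 mk8 0 0 0 0 4 0 0 0,
 mk8 0 0 0 0 0 0 4 0,
 mk8 (-1) 1 0 0 (-1) (-1) 2 0,
 mk8 (-1) 1 0 0 (-1) (-1) (-2) 0,
 mk8 0 0 (-2) 0 (-1) (-1) (-1) 1,
 mk8 2 0 (-2) 0 (-2) 0 (-2) 0,
 mk8 2 0 0 0 (-1) 1 (-1) (-1),
 mk8 (-1) 1 0 0 1 1 2 0,
 mk8 (-1) 1 2 0 0 0 1 1,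
 mk8 0 0 2 0 (-1) (-1) (-1) 1,
 mk8 2 0 2 0 2 0 2 0,
 mk8 2 0 (-1) 1 1 1 0 0,
 mk8 2 0 (-1) (-1) 0 0 (-1) 1,
 mk8 2 0 0 0 (-1) 1 (-1) (-1),
 mk8 2 0 (-2) 0 (-2) 0 (-2) 0,
 mk8 0 0 (-2) 0 (-1) (-1) (-1) 1,
 mk8 (-1) 1 0 0 1 1 2 0,
 mk8 0 0 2 0 (-1) (-1) (-1) 1,
 mk8 (-1) 1 2 0 0 0 1 1,
 mk8 2 0 0 0 (-1) 1 (-1) (-1),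
 mk8 2 0 (-2) 0 (-2) 0 (-2) 0,
 mk8 0 0 (-2) 0 (-1) (-1) (-1) 1,
 mk8 (-1) 1 0 0 1 1 2 0,
 mk8 0 0 (-1) 1 (-2) 0 (-1) (-1),
 mk8 2 0 0 0 1 (-1) 1 1,
 mk8 (-1) 1 2 0 0 0 1 1,
 mk8 2 0 0 0 (-1) 1 1 1,
 mk8 2 0 (-1) (-1) 0 0 (-1) 1,
 mk8 (-2) 0 (-1) (-1) 0 0 (-1) 1,
 mk8 (-1) (-1) 1 (-1) 0 0 2 0,
 mk8 (-1) (-1) 2 0 (-1) 1 0 0,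
 mk8 0 0 1 1 (-1) 1 (-2) 0,
 mk8 (-1) (-1) (-1) 1 0 0 2 0,
 mk8 2 0 2 0 2 0 (-2) 0,
 mk8 1 (-1) 1 1 2 0 0 0,
 mk8 (-2) 0 (-1) 1 (-1) (-1) 0 0,
 mk8 (-2) 0 2 0 (-2) 0 2 0,
 mk8 2 0 2 0 2 0 2 0,
 mk8 2 0 (-1) 1 1 1 0 0,
 mk8 0 0 1 1 1 (-1) 2 0,
 mk8 0 0 1 1 (-1) 1 2 0,
 mk8 2 0 2 0 2 0 (-2) 0,
 mk8 1 (-1) 1 1 2 0 0 0,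
 mk8 2 0 (-1) (-1) 0 0 (-1) 1,
 mk8 (-2) 0 (-1) (-1) 0 0 (-1) 1,
 mk8 2 0 (-1) (-1) 0 0 (-1) 1,
 mk8 0 0 (-4) 0 0 0 0 0,
 mk8 1 1 (-2) 0 (-1) 1 0 0,
 mk8 (-1) (-1) (-2) 0 1 (-1) 0 0,
 mk8 (-1) 1 (-1) (-1) 2 0 0 0,
 mk8 1 (-1) (-1) (-1) 2 0 0 0,
 mk8 (-2) 0 (-1) (-1) 0 0 1 (-1),
 mk8 (-1) (-1) 1 (-1) 0 0 (-2) 0,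
 mk8 (-1) (-1) 0 0 (-2) 0 (-1) 1,
 mk8 (-1) (-1) 0 0 (-2) 0 1 (-1),
 mk8 (-1) (-1) 1 (-1) 0 0 2 0,
 mk8 (-1) (-1) 2 0 (-1) 1 0 0,
 mk8 0 0 1 1 (-1) 1 (-2) 0,
 mk8 (-1) (-1) (-1) 1 0 0 2 0,
 mk8 (-1) (-1) (-2) 0 1 (-1) 0 0,
 mk8 2 0 (-1) (-1) 0 0 (-1) 1,
 mk8 (-2) 0 (-1) (-1) 0 0 (-1) 1,
 mk8 (-1) (-1) (-2) 0 (-1) 1 0 0,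
 mk8 0 0 (-1) (-1) (-1) 1 2 0,
 mk8 (-2) 0 (-1) (-1) 0 0 1 (-1),
 mk8 (-1) 1 (-1) (-1) 2 0 0 0,
 mk8 (-1) (-1) (-1) 1 0 0 (-2) 0,
 mk8 (-1) (-1) 0 0 (-2) 0 1 (-1),
 mk8 1 (-1) (-1) (-1) 2 0 0 0,
 mk8 (-2) 0 2 0 (-2) 0 (-2) 0,
 mk8 (-1) (-1) 1 (-1) 0 0 (-2) 0,
 mk8 (-2) 0 (-2) 0 2 0 2 0,
 mk8 (-1) (-1) 0 0 2 0 (-1) 1,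
 mk8 (-2) 0 (-1) (-1) 0 0 1 (-1),
 mk8 (-1) (-1) 0 0 (-2) 0 1 (-1),
 mk8 (-1) (-1) 1 (-1) 0 0 (-2) 0,
 mk8 (-1) (-1) 0 0 (-2) 0 (-1) 1,
 mk8 (-1) 1 (-1) (-1) 2 0 0 0,
 mk8 1 (-1) (-1) (-1) 2 0 0 0,
 mk8 (-1) (-1) 2 0 (-1) 1 0 0,
 mk8 0 0 1 1 (-1) 1 (-2) 0,
 mk8 (-1) (-1) 1 (-1) 0 0 2 0,
 mk8 (-1) (-1) 0 0 2 0 1 (-1),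
 mk8 (-2) 0 (-1) 1 (-1) (-1) 0 0,
 mk8 (-1) (-1) (-1) 1 0 0 2 0,
 mk8 (-2) 0 (-1) 1 (-1) (-1) 0 0,
 mk8 (-2) 0 2 0 (-2) 0 2 0,
 mk8 0 0 1 1 (-1) 1 2 0,
 mk8 0 0 1 1 1 (-1) 2 0,
 mk8 1 (-1) 1 1 2 0 0 0,
 mk8 2 0 2 0 2 0 (-2) 0,
 mk8 (-2) 0 2 0 2 0 (-2) 0,
 mk8 1 (-1) 2 0 0 0 (-1) (-1),
 mk8 2 0 2 0 (-2) 0 2 0,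
 mk8 0 0 2 0 (-1) (-1) 1 (-1),
 mk8 0 0 2 0 (-1) (-1) (-1) 1,
 mk8 2 0 (-1) 1 (-1) (-1) 0 0]
def Is : List ℕ := [3, 5, 4, 2, 2, 7, 1, 6, 6, 6, 4, 4, 8, 4, 6, 6, 6, 6, 6, 6, 6, 6, 6, 3, 2, 2, 2, 8, 8, 8, 4, 4, 4, 4, 4, 0, 5, 5, 5, 3, 3, 3, 7, 7, 7, 2, 2, 2, 2, 2, 5, 5, 5, 5, 5, 5, 5, 5, 3, 3, 3, 3, 3, 3, 7, 7, 2, 7, 7, 3, 3, 3, 3, 3, 3, 3, 3, 3, 7, 7, 7, 7, 4, 8, 8, 2, 2, 2, 2, 2, 2, 2, 2, 2, 2, 2, 4, 4, 4, 4, 4, 4, 8, 8, 8, 2, 2, 8, 4, 4, 4, 4, 8, 8, 2, 2, 2, 2, 2, 2]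

set_option maxHeartbeats 4000000
set_option maxRecDepth 1000000

lemma dec1 : ∀ X ∈ L, X * cstar X = q16 ∧ cstar X * X = q16 := by decide
lemma dec2a : ∀ X ∈ L, G1q * X ∈ L.map (fun z => q4 * z) := by decide
lemma dec2b : ∀ X ∈ L, G2q * X ∈ L.map (fun z => q4 * z) := by decide
lemma dec2c : ∀ X ∈ L, cstar G1q * X ∈ L.map (fun z => q4 * z) := by decide
lemma dec2d : ∀ X ∈ L, cstar G2q * X ∈ L.map (fun z => q4 * z) := by decide
lemma dec_len : L.length = 120 := by decide
lemma dec4 : ∀ n : Fin 120, Cs.getD ↑n q0 * Rs.getD (Is.getD ↑n 0) q0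
    = L.getD ↑n q0 * Cs.getD ↑n q0 := by decide
lemma dec4b : ∀ n : Fin 120, Cs.getD ↑n q0 ∈ L := by decide
lemma dec4c : ∀ n : Fin 120, Is.getD ↑n 0 < 9 := by decide
lemma dec5 : ∀ i j : Fin 9, i ≠ j → (Rs.getD ↑i q0).re ≠ (Rs.getD ↑j q0).re := by decide
lemma dec6 : ∀ i : Fin 9, Rs.getD ↑i q0 ∈ L := by decide
lemma dec7 : q4 ∈ L := by decide
lemma q16_eq : q16 = q4 * q4 := by decide

/-! ### Units -/

lemma unit_pf {X : ℍ[A]} (h : X * cstar X = q16) : qval X * qval (cstar X) = 1 :=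
  (qval_mul_eq (h.trans q16_eq)).trans qval_one

lemma unit_pf' {X : ℍ[A]} (h : cstar X * X = q16) : qval (cstar X) * qval X = 1 :=
  (qval_mul_eq (h.trans q16_eq)).trans qval_one

def mkUnit (X : ℍ[A]) (h1 : X * cstar X = q16) (h2 : cstar X * X = q16) : (ℍ[ℝ])ˣ :=
  ⟨qval X, qval (cstar X), unit_pf h1, unit_pf' h2⟩

def gu1 : (ℍ[ℝ])ˣ := mkUnit G1q (by decide) (by decide)
def gu2 : (ℍ[ℝ])ˣ := mkUnit G2q (by decide) (by decide)

lemma gu1_mem : gu1 ∈ G2I := Subgroup.subset_closure (Or.inl val_g1.symm)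
lemma gu2_mem : gu2 ∈ G2I := Subgroup.subset_closure (Or.inr val_g2.symm)

def InG (q : ℍ[ℝ]) : Prop := ∃ u : (ℍ[ℝ])ˣ, u ∈ G2I ∧ (u : ℍ[ℝ]) = q

lemma InG_mul {p q : ℍ[ℝ]} : InG p → InG q → InG (p * q) := by
  rintro ⟨u, hu, rfl⟩ ⟨v, hv, rfl⟩
  exact ⟨u * v, mul_mem hu hv, rfl⟩

lemma InG_step {P Q Z : ℍ[A]} (h : P * Q = q4 * Z) (hp : InG (qval P)) (hq : InG (qval Q)) :
    InG (qval Z) := qval_mul_eq h ▸ InG_mul hp hq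

lemma L_mem : ∀ X ∈ L, InG (qval X) := by
  have h0 : InG (qval (mk8 2 0 (-1) (-1) 0 0 (-1) 1)) := ⟨gu1, gu1_mem, rfl⟩
  have h1 : InG (qval (mk8 1 1 (-2) 0 (-1) 1 0 0)) := ⟨gu2, gu2_mem, rfl⟩
  have h2 : InG (qval (mk8 (-2) 0 (-1) (-1) 0 0 (-1) 1)) := InG_step (by decide : (mk8 2 0 (-1) (-1) 0 0 (-1) 1) * (mk8 2 0 (-1) (-1) 0 0 (-1) 1) = q4 * (mk8 (-2) 0 (-1) (-1) 0 0 (-1) 1)) h0 h0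
  have h3 : InG (qval (mk8 0 0 (-4) 0 0 0 0 0)) := InG_step (by decide : (mk8 2 0 (-1) (-1) 0 0 (-1) 1) * (mk8 1 1 (-2) 0 (-1) 1 0 0) = q4 * (mk8 0 0 (-4) 0 0 0 0 0)) h0 h1
  have h4 : InG (qval (mk8 0 0 (-1) (-1) (-1) 1 2 0)) := InG_step (by decide : (mk8 1 1 (-2) 0 (-1) 1 0 0) * (mk8 2 0 (-1) (-1) 0 0 (-1) 1) = q4 * (mk8 0 0 (-1) (-1) (-1) 1 2 0)) h1 h0
  have h5 : InG (qval (mk8 (-1) 1 (-1) (-1) 2 0 0 0)) := InG_step (by decide : (mk8 1 1 (-2) 0 (-1) 1 0 0) * (mk8 1 1 (-2) 0 (-1) 1 0 0) = q4 * (mk8 (-1) 1 (-1) (-1) 2 0 0 0)) h1 h1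
  have h6 : InG (qval (mk8 (-4) 0 0 0 0 0 0 0)) := InG_step (by decide : (mk8 2 0 (-1) (-1) 0 0 (-1) 1) * (mk8 (-2) 0 (-1) (-1) 0 0 (-1) 1) = q4 * (mk8 (-4) 0 0 0 0 0 0 0)) h0 h2
  have h7 : InG (qval (mk8 (-1) (-1) (-2) 0 1 (-1) 0 0)) := InG_step (by decide : (mk8 2 0 (-1) (-1) 0 0 (-1) 1) * (mk8 0 0 (-4) 0 0 0 0 0) = q4 * (mk8 (-1) (-1) (-2) 0 1 (-1) 0 0)) h0 h3
  have h8 : InG (qval (mk8 (-1) (-1) (-2) 0 (-1) 1 0 0)) := InG_step (by decide : (mk8 0 0 (-4) 0 0 0 0 0) * (mk8 2 0 (-1) (-1) 0 0 (-1) 1) = q4 * (mk8 (-1) (-1) (-2) 0 (-1) 1 0 0)) h3 h0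
  have h9 : InG (qval (mk8 (-1) (-1) 1 (-1) 0 0 2 0)) := InG_step (by decide : (mk8 0 0 (-1) (-1) (-1) 1 2 0) * (mk8 2 0 (-1) (-1) 0 0 (-1) 1) = q4 * (mk8 (-1) (-1) 1 (-1) 0 0 2 0)) h4 h0
  have h10 : InG (qval (mk8 (-2) 0 (-1) (-1) 0 0 1 (-1))) := InG_step (by decide : (mk8 2 0 (-1) (-1) 0 0 (-1) 1) * (mk8 (-1) 1 (-1) (-1) 2 0 0 0) = q4 * (mk8 (-2) 0 (-1) (-1) 0 0 1 (-1))) h0 h5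
  have h11 : InG (qval (mk8 (-2) 0 (-2) 0 2 0 2 0)) := InG_step (by decide : (mk8 (-1) 1 (-1) (-1) 2 0 0 0) * (mk8 2 0 (-1) (-1) 0 0 (-1) 1) = q4 * (mk8 (-2) 0 (-2) 0 2 0 2 0)) h5 h0
  have h12 : InG (qval (mk8 1 (-1) (-1) (-1) 2 0 0 0)) := InG_step (by decide : (mk8 1 1 (-2) 0 (-1) 1 0 0) * (mk8 (-1) 1 (-1) (-1) 2 0 0 0) = q4 * (mk8 1 (-1) (-1) (-1) 2 0 0 0)) h1 h5
  have h13 : InG (qval (mk8 (-2) 0 1 1 0 0 1 (-1))) := InG_step (by decide : (mk8 (-2) 0 (-1) (-1) 0 0 (-1) 1) * (mk8 (-2) 0 (-1) (-1) 0 0 (-1) 1) = q4 * (mk8 (-2) 0 1 1 0 0 1 (-1))) h2 h2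
  have h14 : InG (qval (mk8 (-1) (-1) 2 0 1 (-1) 0 0)) := InG_step (by decide : (mk8 (-2) 0 (-1) (-1) 0 0 (-1) 1) * (mk8 0 0 (-4) 0 0 0 0 0) = q4 * (mk8 (-1) (-1) 2 0 1 (-1) 0 0)) h2 h3
  have h15 : InG (qval (mk8 (-1) (-1) 2 0 (-1) 1 0 0)) := InG_step (by decide : (mk8 0 0 (-4) 0 0 0 0 0) * (mk8 (-2) 0 (-1) (-1) 0 0 (-1) 1) = q4 * (mk8 (-1) (-1) 2 0 (-1) 1 0 0)) h3 h2
  have h16 : InG (qval (mk8 (-1) (-1) (-1) 1 0 0 (-2) 0)) := InG_step (by decide : (mk8 (-2) 0 (-1) (-1) 0 0 (-1) 1) * (mk8 0 0 (-1) (-1) (-1) 1 2 0) = q4 * (mk8 (-1) (-1) (-1) 1 0 0 (-2) 0)) h2 h4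
  have h17 : InG (qval (mk8 (-1) (-1) 0 0 (-2) 0 1 (-1))) := InG_step (by decide : (mk8 (-2) 0 (-1) (-1) 0 0 (-1) 1) * (mk8 (-1) 1 (-1) (-1) 2 0 0 0) = q4 * (mk8 (-1) (-1) 0 0 (-2) 0 1 (-1))) h2 h5
  have h18 : InG (qval (mk8 (-1) (-1) (-1) 1 0 0 2 0)) := InG_step (by decide : (mk8 (-1) 1 (-1) (-1) 2 0 0 0) * (mk8 (-2) 0 (-1) (-1) 0 0 (-1) 1) = q4 * (mk8 (-1) (-1) (-1) 1 0 0 2 0)) h5 h2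
  have h19 : InG (qval (mk8 (-1) (-1) 0 0 2 0 1 (-1))) := InG_step (by decide : (mk8 0 0 (-4) 0 0 0 0 0) * (mk8 0 0 (-1) (-1) (-1) 1 2 0) = q4 * (mk8 (-1) (-1) 0 0 2 0 1 (-1))) h3 h4
  have h20 : InG (qval (mk8 (-1) (-1) 0 0 (-2) 0 (-1) 1)) := InG_step (by decide : (mk8 0 0 (-1) (-1) (-1) 1 2 0) * (mk8 0 0 (-4) 0 0 0 0 0) = q4 * (mk8 (-1) (-1) 0 0 (-2) 0 (-1) 1)) h4 h3
  have h21 : InG (qval (mk8 (-1) (-1) 1 (-1) 0 0 (-2) 0)) := InG_step (by decide : (mk8 0 0 (-4) 0 0 0 0 0) * (mk8 (-1) 1 (-1) (-1) 2 0 0 0) = q4 * (mk8 (-1) (-1) 1 (-1) 0 0 (-2) 0)) h3 h5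
  have h22 : InG (qval (mk8 (-1) (-1) 0 0 2 0 (-1) 1)) := InG_step (by decide : (mk8 (-1) 1 (-1) (-1) 2 0 0 0) * (mk8 0 0 (-1) (-1) (-1) 1 2 0) = q4 * (mk8 (-1) (-1) 0 0 2 0 (-1) 1)) h5 h4
  have h23 : InG (qval (mk8 2 0 1 1 0 0 1 (-1))) := InG_step (by decide : (mk8 2 0 (-1) (-1) 0 0 (-1) 1) * (mk8 (-2) 0 1 1 0 0 1 (-1)) = q4 * (mk8 2 0 1 1 0 0 1 (-1))) h0 h13
  have h24 : InG (qval (mk8 0 0 4 0 0 0 0 0)) := InG_step (by decide : (mk8 2 0 (-1) (-1) 0 0 (-1) 1) * (mk8 (-1) (-1) 2 0 1 (-1) 0 0) = q4 * (mk8 0 0 4 0 0 0 0 0)) h0 h14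
  have h25 : InG (qval (mk8 0 0 1 1 1 (-1) (-2) 0)) := InG_step (by decide : (mk8 (-1) (-1) 2 0 1 (-1) 0 0) * (mk8 2 0 (-1) (-1) 0 0 (-1) 1) = q4 * (mk8 0 0 1 1 1 (-1) (-2) 0)) h14 h0
  have h26 : InG (qval (mk8 0 0 1 1 (-1) 1 (-2) 0)) := InG_step (by decide : (mk8 2 0 (-1) (-1) 0 0 (-1) 1) * (mk8 (-1) (-1) 2 0 (-1) 1 0 0) = q4 * (mk8 0 0 1 1 (-1) 1 (-2) 0)) h0 h15
  have h27 : InG (qval (mk8 1 (-1) 1 1 (-2) 0 0 0)) := InG_step (by decide : (mk8 2 0 (-1) (-1) 0 0 (-1) 1) * (mk8 (-1) (-1) 0 0 (-2) 0 1 (-1)) = q4 * (mk8 1 (-1) 1 1 (-2) 0 0 0)) h0 h17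
  have h28 : InG (qval (mk8 1 (-1) 2 0 0 0 (-1) (-1))) := InG_step (by decide : (mk8 (-1) (-1) 0 0 (-2) 0 1 (-1)) * (mk8 2 0 (-1) (-1) 0 0 (-1) 1) = q4 * (mk8 1 (-1) 2 0 0 0 (-1) (-1))) h17 h0
  have h29 : InG (qval (mk8 1 (-1) 1 1 2 0 0 0)) := InG_step (by decide : (mk8 2 0 (-1) (-1) 0 0 (-1) 1) * (mk8 (-1) (-1) (-1) 1 0 0 2 0) = q4 * (mk8 1 (-1) 1 1 2 0 0 0)) h0 h18
  have h30 : InG (qval (mk8 (-2) 0 1 1 0 0 (-1) 1)) := InG_step (by decide : (mk8 2 0 (-1) (-1) 0 0 (-1) 1) * (mk8 (-1) (-1) 0 0 (-2) 0 (-1) 1) = q4 * (mk8 (-2) 0 1 1 0 0 (-1) 1)) h0 h20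
  have h31 : InG (qval (mk8 (-2) 0 2 0 (-2) 0 (-2) 0)) := InG_step (by decide : (mk8 (-1) (-1) 0 0 (-2) 0 (-1) 1) * (mk8 2 0 (-1) (-1) 0 0 (-1) 1) = q4 * (mk8 (-2) 0 2 0 (-2) 0 (-2) 0)) h20 h0
  have h32 : InG (qval (mk8 (-2) 0 2 0 2 0 (-2) 0)) := InG_step (by decide : (mk8 (-1) (-1) 1 (-1) 0 0 (-2) 0) * (mk8 2 0 (-1) (-1) 0 0 (-1) 1) = q4 * (mk8 (-2) 0 2 0 2 0 (-2) 0)) h21 h0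
  have h33 : InG (qval (mk8 (-2) 0 (-1) 1 (-1) (-1) 0 0)) := InG_step (by decide : (mk8 1 1 (-2) 0 (-1) 1 0 0) * (mk8 (-1) (-1) 0 0 (-2) 0 1 (-1)) = q4 * (mk8 (-2) 0 (-1) 1 (-1) (-1) 0 0)) h1 h17
  have h34 : InG (qval (mk8 (-2) 0 2 0 (-2) 0 2 0)) := InG_step (by decide : (mk8 (-1) (-1) (-1) 1 0 0 2 0) * (mk8 1 1 (-2) 0 (-1) 1 0 0) = q4 * (mk8 (-2) 0 2 0 (-2) 0 2 0)) h18 h1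
  have h35 : InG (qval (mk8 4 0 0 0 0 0 0 0)) := InG_step (by decide : (mk8 (-2) 0 (-1) (-1) 0 0 (-1) 1) * (mk8 (-2) 0 1 1 0 0 1 (-1)) = q4 * (mk8 4 0 0 0 0 0 0 0)) h2 h13
  have h36 : InG (qval (mk8 1 1 2 0 (-1) 1 0 0)) := InG_step (by decide : (mk8 (-2) 0 (-1) (-1) 0 0 (-1) 1) * (mk8 (-1) (-1) 2 0 1 (-1) 0 0) = q4 * (mk8 1 1 2 0 (-1) 1 0 0)) h2 h14
  have h37 : InG (qval (mk8 1 1 (-1) 1 0 0 (-2) 0)) := InG_step (by decide : (mk8 (-1) (-1) 2 0 1 (-1) 0 0) * (mk8 (-2) 0 (-1) (-1) 0 0 (-1) 1) = q4 * (mk8 1 1 (-1) 1 0 0 (-2) 0)) h14 h2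
  have h38 : InG (qval (mk8 1 1 2 0 1 (-1) 0 0)) := InG_step (by decide : (mk8 (-1) (-1) 2 0 (-1) 1 0 0) * (mk8 (-2) 0 (-1) (-1) 0 0 (-1) 1) = q4 * (mk8 1 1 2 0 1 (-1) 0 0)) h15 h2
  have h39 : InG (qval (mk8 2 0 1 1 0 0 (-1) 1)) := InG_step (by decide : (mk8 (-2) 0 (-1) (-1) 0 0 (-1) 1) * (mk8 (-1) (-1) 0 0 (-2) 0 1 (-1)) = q4 * (mk8 2 0 1 1 0 0 (-1) 1)) h2 h17
  have h40 : InG (qval (mk8 2 0 2 0 2 0 (-2) 0)) := InG_step (by decide : (mk8 (-1) (-1) 0 0 (-2) 0 1 (-1)) * (mk8 (-2) 0 (-1) (-1) 0 0 (-1) 1) = q4 * (mk8 2 0 2 0 2 0 (-2) 0)) h17 h2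
  have h41 : InG (qval (mk8 2 0 2 0 (-2) 0 (-2) 0)) := InG_step (by decide : (mk8 (-1) (-1) (-1) 1 0 0 2 0) * (mk8 (-2) 0 (-1) (-1) 0 0 (-1) 1) = q4 * (mk8 2 0 2 0 (-2) 0 (-2) 0)) h18 h2
  have h42 : InG (qval (mk8 (-1) 1 1 1 2 0 0 0)) := InG_step (by decide : (mk8 (-2) 0 (-1) (-1) 0 0 (-1) 1) * (mk8 (-1) (-1) 0 0 (-2) 0 (-1) 1) = q4 * (mk8 (-1) 1 1 1 2 0 0 0)) h2 h20
  have h43 : InG (qval (mk8 (-1) 1 2 0 0 0 (-1) (-1))) := InG_step (by decide : (mk8 (-1) (-1) 0 0 (-2) 0 (-1) 1) * (mk8 (-2) 0 (-1) (-1) 0 0 (-1) 1) = q4 * (mk8 (-1) 1 2 0 0 0 (-1) (-1))) h20 h2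
  have h44 : InG (qval (mk8 (-1) 1 1 1 (-2) 0 0 0)) := InG_step (by decide : (mk8 (-2) 0 (-1) (-1) 0 0 (-1) 1) * (mk8 (-1) (-1) 1 (-1) 0 0 (-2) 0) = q4 * (mk8 (-1) 1 1 1 (-2) 0 0 0)) h2 h21
  have h45 : InG (qval (mk8 0 0 1 1 1 (-1) 2 0)) := InG_step (by decide : (mk8 0 0 (-4) 0 0 0 0 0) * (mk8 (-1) (-1) 0 0 (-2) 0 1 (-1)) = q4 * (mk8 0 0 1 1 1 (-1) 2 0)) h3 h17
  have h46 : InG (qval (mk8 0 0 1 1 (-1) 1 2 0)) := InG_step (by decide : (mk8 (-1) (-1) 0 0 2 0 1 (-1)) * (mk8 0 0 (-4) 0 0 0 0 0) = q4 * (mk8 0 0 1 1 (-1) 1 2 0)) h19 h3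
  have h47 : InG (qval (mk8 0 0 2 0 (-1) (-1) 1 (-1))) := InG_step (by decide : (mk8 (-1) (-1) (-1) 1 0 0 2 0) * (mk8 0 0 (-1) (-1) (-1) 1 2 0) = q4 * (mk8 0 0 2 0 (-1) (-1) 1 (-1))) h18 h4
  have h48 : InG (qval (mk8 0 0 (-1) 1 (-2) 0 (-1) (-1))) := InG_step (by decide : (mk8 0 0 (-1) (-1) (-1) 1 2 0) * (mk8 (-1) (-1) 0 0 2 0 1 (-1)) = q4 * (mk8 0 0 (-1) 1 (-2) 0 (-1) (-1))) h4 h19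
  have h49 : InG (qval (mk8 0 0 2 0 (-1) (-1) (-1) 1)) := InG_step (by decide : (mk8 (-1) 1 (-1) (-1) 2 0 0 0) * (mk8 (-1) (-1) 0 0 (-2) 0 1 (-1)) = q4 * (mk8 0 0 2 0 (-1) (-1) (-1) 1)) h5 h17
  have h50 : InG (qval (mk8 1 1 (-2) 0 1 (-1) 0 0)) := InG_step (by decide : (mk8 (-4) 0 0 0 0 0 0 0) * (mk8 (-1) (-1) 2 0 (-1) 1 0 0) = q4 * (mk8 1 1 (-2) 0 1 (-1) 0 0)) h6 h15
  have h51 : InG (qval (mk8 1 1 1 (-1) 0 0 2 0)) := InG_step (by decide : (mk8 (-4) 0 0 0 0 0 0 0) * (mk8 (-1) (-1) (-1) 1 0 0 (-2) 0) = q4 * (mk8 1 1 1 (-1) 0 0 2 0)) h6 h16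
  have h52 : InG (qval (mk8 1 1 0 0 2 0 (-1) 1)) := InG_step (by decide : (mk8 (-4) 0 0 0 0 0 0 0) * (mk8 (-1) (-1) 0 0 (-2) 0 1 (-1)) = q4 * (mk8 1 1 0 0 2 0 (-1) 1)) h6 h17
  have h53 : InG (qval (mk8 1 1 1 (-1) 0 0 (-2) 0)) := InG_step (by decide : (mk8 (-4) 0 0 0 0 0 0 0) * (mk8 (-1) (-1) (-1) 1 0 0 2 0) = q4 * (mk8 1 1 1 (-1) 0 0 (-2) 0)) h6 h18
  have h54 : InG (qval (mk8 1 1 0 0 (-2) 0 (-1) 1)) := InG_step (by decide : (mk8 (-4) 0 0 0 0 0 0 0) * (mk8 (-1) (-1) 0 0 2 0 1 (-1)) = q4 * (mk8 1 1 0 0 (-2) 0 (-1) 1)) h6 h19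
  have h55 : InG (qval (mk8 1 1 0 0 2 0 1 (-1))) := InG_step (by decide : (mk8 (-4) 0 0 0 0 0 0 0) * (mk8 (-1) (-1) 0 0 (-2) 0 (-1) 1) = q4 * (mk8 1 1 0 0 2 0 1 (-1))) h6 h20
  have h56 : InG (qval (mk8 1 1 (-1) 1 0 0 2 0)) := InG_step (by decide : (mk8 (-4) 0 0 0 0 0 0 0) * (mk8 (-1) (-1) 1 (-1) 0 0 (-2) 0) = q4 * (mk8 1 1 (-1) 1 0 0 2 0)) h6 h21
  have h57 : InG (qval (mk8 1 1 0 0 (-2) 0 1 (-1))) := InG_step (by decide : (mk8 (-4) 0 0 0 0 0 0 0) * (mk8 (-1) (-1) 0 0 2 0 (-1) 1) = q4 * (mk8 1 1 0 0 (-2) 0 1 (-1))) h6 h22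
  have h58 : InG (qval (mk8 2 0 2 0 2 0 2 0)) := InG_step (by decide : (mk8 (-1) (-1) (-2) 0 1 (-1) 0 0) * (mk8 (-1) (-1) 0 0 (-2) 0 1 (-1)) = q4 * (mk8 2 0 2 0 2 0 2 0)) h7 h17
  have h59 : InG (qval (mk8 2 0 (-1) 1 1 1 0 0)) := InG_step (by decide : (mk8 (-1) (-1) 0 0 (-2) 0 1 (-1)) * (mk8 (-1) (-1) (-2) 0 1 (-1) 0 0) = q4 * (mk8 2 0 (-1) 1 1 1 0 0)) h17 h7
  have h60 : InG (qval (mk8 2 0 (-1) 1 (-1) (-1) 0 0)) := InG_step (by decide : (mk8 (-1) (-1) (-2) 0 (-1) 1 0 0) * (mk8 (-1) (-1) 0 0 2 0 1 (-1)) = q4 * (mk8 2 0 (-1) 1 (-1) (-1) 0 0)) h8 h19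
  have h61 : InG (qval (mk8 2 0 2 0 (-2) 0 2 0)) := InG_step (by decide : (mk8 (-1) (-1) 0 0 2 0 1 (-1)) * (mk8 (-1) (-1) (-2) 0 (-1) 1 0 0) = q4 * (mk8 2 0 2 0 (-2) 0 2 0)) h19 h8
  have h62 : InG (qval (mk8 2 0 0 0 (-1) 1 (-1) (-1))) := InG_step (by decide : (mk8 (-1) (-1) 1 (-1) 0 0 2 0) * (mk8 (-1) (-1) (-1) 1 0 0 2 0) = q4 * (mk8 2 0 0 0 (-1) 1 (-1) (-1))) h9 h18
  have h63 : InG (qval (mk8 2 0 0 0 1 (-1) (-1) (-1))) := InG_step (by decide : (mk8 (-1) (-1) (-1) 1 0 0 2 0) * (mk8 (-1) (-1) 1 (-1) 0 0 2 0) = q4 * (mk8 2 0 0 0 1 (-1) (-1) (-1))) h18 h9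
  have h64 : InG (qval (mk8 (-1) 1 2 0 0 0 1 1)) := InG_step (by decide : (mk8 (-2) 0 (-1) (-1) 0 0 1 (-1)) * (mk8 (-1) (-1) 0 0 (-2) 0 1 (-1)) = q4 * (mk8 (-1) 1 2 0 0 0 1 1)) h10 h17
  have h65 : InG (qval (mk8 (-1) 1 0 0 (-1) (-1) (-2) 0)) := InG_step (by decide : (mk8 (-1) (-1) (-1) 1 0 0 2 0) * (mk8 (-2) 0 (-2) 0 2 0 2 0) = q4 * (mk8 (-1) 1 0 0 (-1) (-1) (-2) 0)) h18 h11
  have h66 : InG (qval (mk8 0 0 (-1) (-1) 1 (-1) 2 0)) := InG_step (by decide : (mk8 (-2) 0 1 1 0 0 1 (-1)) * (mk8 (-1) (-1) 2 0 (-1) 1 0 0) = q4 * (mk8 0 0 (-1) (-1) 1 (-1) 2 0)) h13 h15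
  have h67 : InG (qval (mk8 (-1) 1 (-2) 0 0 0 1 1)) := InG_step (by decide : (mk8 (-1) (-1) 0 0 (-2) 0 1 (-1)) * (mk8 (-2) 0 1 1 0 0 1 (-1)) = q4 * (mk8 (-1) 1 (-2) 0 0 0 1 1)) h17 h13
  have h68 : InG (qval (mk8 (-1) 1 (-1) (-1) (-2) 0 0 0)) := InG_step (by decide : (mk8 (-2) 0 1 1 0 0 1 (-1)) * (mk8 (-1) (-1) (-1) 1 0 0 2 0) = q4 * (mk8 (-1) 1 (-1) (-1) (-2) 0 0 0)) h13 h18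
  have h69 : InG (qval (mk8 2 0 (-1) (-1) 0 0 1 (-1))) := InG_step (by decide : (mk8 (-2) 0 1 1 0 0 1 (-1)) * (mk8 (-1) (-1) 0 0 (-2) 0 (-1) 1) = q4 * (mk8 2 0 (-1) (-1) 0 0 1 (-1))) h13 h20
  have h70 : InG (qval (mk8 2 0 (-2) 0 2 0 2 0)) := InG_step (by decide : (mk8 (-1) (-1) 0 0 (-2) 0 (-1) 1) * (mk8 (-2) 0 1 1 0 0 1 (-1)) = q4 * (mk8 2 0 (-2) 0 2 0 2 0)) h20 h13
  have h71 : InG (qval (mk8 2 0 (-2) 0 (-2) 0 2 0)) := InG_step (by decide : (mk8 (-1) (-1) 1 (-1) 0 0 (-2) 0) * (mk8 (-2) 0 1 1 0 0 1 (-1)) = q4 * (mk8 2 0 (-2) 0 (-2) 0 2 0)) h21 h13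
  have h72 : InG (qval (mk8 2 0 1 (-1) 1 1 0 0)) := InG_step (by decide : (mk8 (-1) (-1) 2 0 1 (-1) 0 0) * (mk8 (-1) (-1) 0 0 (-2) 0 1 (-1)) = q4 * (mk8 2 0 1 (-1) 1 1 0 0)) h14 h17
  have h73 : InG (qval (mk8 2 0 (-2) 0 2 0 (-2) 0)) := InG_step (by decide : (mk8 (-1) (-1) (-1) 1 0 0 2 0) * (mk8 (-1) (-1) 2 0 1 (-1) 0 0) = q4 * (mk8 2 0 (-2) 0 2 0 (-2) 0)) h18 h14
  have h74 : InG (qval (mk8 2 0 (-2) 0 (-2) 0 (-2) 0)) := InG_step (by decide : (mk8 (-1) (-1) 2 0 (-1) 1 0 0) * (mk8 (-1) (-1) (-1) 1 0 0 2 0) = q4 * (mk8 2 0 (-2) 0 (-2) 0 (-2) 0)) h15 h18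
  have h75 : InG (qval (mk8 2 0 1 (-1) (-1) (-1) 0 0)) := InG_step (by decide : (mk8 (-1) (-1) 0 0 2 0 1 (-1)) * (mk8 (-1) (-1) 2 0 (-1) 1 0 0) = q4 * (mk8 2 0 1 (-1) (-1) (-1) 0 0)) h19 h15
  have h76 : InG (qval (mk8 2 0 0 0 (-1) 1 1 1)) := InG_step (by decide : (mk8 (-1) (-1) 0 0 (-2) 0 1 (-1)) * (mk8 (-1) (-1) (-1) 1 0 0 (-2) 0) = q4 * (mk8 2 0 0 0 (-1) 1 1 1)) h17 h16
  have h77 : InG (qval (mk8 2 0 0 0 1 (-1) 1 1)) := InG_step (by decide : (mk8 (-1) (-1) (-1) 1 0 0 (-2) 0) * (mk8 (-1) (-1) 0 0 2 0 1 (-1)) = q4 * (mk8 2 0 0 0 1 (-1) 1 1)) h16 h19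
  have h78 : InG (qval (mk8 (-1) 1 0 0 1 1 2 0)) := InG_step (by decide : (mk8 (-1) (-1) 0 0 (-2) 0 1 (-1)) * (mk8 (-1) (-1) 0 0 (-2) 0 1 (-1)) = q4 * (mk8 (-1) 1 0 0 1 1 2 0)) h17 h17
  have h79 : InG (qval (mk8 (-1) 1 (-2) 0 0 0 (-1) (-1))) := InG_step (by decide : (mk8 (-1) (-1) (-1) 1 0 0 2 0) * (mk8 (-1) (-1) (-1) 1 0 0 2 0) = q4 * (mk8 (-1) 1 (-2) 0 0 0 (-1) (-1))) h18 h18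
  have h80 : InG (qval (mk8 (-1) 1 0 0 (-1) (-1) 2 0)) := InG_step (by decide : (mk8 (-1) (-1) 0 0 2 0 1 (-1)) * (mk8 (-1) (-1) 0 0 2 0 1 (-1)) = q4 * (mk8 (-1) 1 0 0 (-1) (-1) 2 0)) h19 h19
  have h81 : InG (qval (mk8 (-1) 1 0 0 1 1 (-2) 0)) := InG_step (by decide : (mk8 (-1) (-1) 0 0 (-2) 0 (-1) 1) * (mk8 (-1) (-1) 0 0 (-2) 0 (-1) 1) = q4 * (mk8 (-1) 1 0 0 1 1 (-2) 0)) h20 h20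
  have h82 : InG (qval (mk8 (-2) 0 (-2) 0 (-2) 0 2 0)) := InG_step (by decide : (mk8 (-1) 1 (-2) 0 0 0 1 1) * (mk8 2 0 (-1) (-1) 0 0 (-1) 1) = q4 * (mk8 (-2) 0 (-2) 0 (-2) 0 2 0)) h67 h0
  have h83 : InG (qval (mk8 1 (-1) (-1) (-1) (-2) 0 0 0)) := InG_step (by decide : (mk8 2 0 (-1) (-1) 0 0 (-1) 1) * (mk8 2 0 (-1) (-1) 0 0 1 (-1)) = q4 * (mk8 1 (-1) (-1) (-1) (-2) 0 0 0)) h0 h69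
  have h84 : InG (qval (mk8 1 (-1) (-2) 0 0 0 1 1)) := InG_step (by decide : (mk8 2 0 (-2) 0 2 0 2 0) * (mk8 2 0 (-1) (-1) 0 0 (-1) 1) = q4 * (mk8 1 (-1) (-2) 0 0 0 1 1)) h70 h0
  have h85 : InG (qval (mk8 0 0 (-1) (-1) (-1) 1 (-2) 0)) := InG_step (by decide : (mk8 2 0 (-1) (-1) 0 0 (-1) 1) * (mk8 2 0 1 (-1) 1 1 0 0) = q4 * (mk8 0 0 (-1) (-1) (-1) 1 (-2) 0)) h0 h72
  have h86 : InG (qval (mk8 0 0 1 (-1) 2 0 1 1)) := InG_step (by decide : (mk8 2 0 1 (-1) 1 1 0 0) * (mk8 2 0 (-1) (-1) 0 0 (-1) 1) = q4 * (mk8 0 0 1 (-1) 2 0 1 1)) h72 h0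
  have h87 : InG (qval (mk8 0 0 (-1) (-1) 1 (-1) (-2) 0)) := InG_step (by decide : (mk8 2 0 (-1) (-1) 0 0 (-1) 1) * (mk8 2 0 (-2) 0 2 0 (-2) 0) = q4 * (mk8 0 0 (-1) (-1) 1 (-1) (-2) 0)) h0 h73
  have h88 : InG (qval (mk8 0 0 (-2) 0 1 1 (-1) 1)) := InG_step (by decide : (mk8 2 0 (-2) 0 2 0 (-2) 0) * (mk8 2 0 (-1) (-1) 0 0 (-1) 1) = q4 * (mk8 0 0 (-2) 0 1 1 (-1) 1)) h73 h0
  have h89 : InG (qval (mk8 0 0 (-2) 0 (-1) (-1) (-1) 1)) := InG_step (by decide : (mk8 2 0 (-1) (-1) 0 0 (-1) 1) * (mk8 2 0 (-2) 0 (-2) 0 (-2) 0) = q4 * (mk8 0 0 (-2) 0 (-1) (-1) (-1) 1)) h0 h74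
  have h90 : InG (qval (mk8 0 0 1 (-1) (-2) 0 1 1)) := InG_step (by decide : (mk8 2 0 (-1) (-1) 0 0 (-1) 1) * (mk8 2 0 1 (-1) (-1) (-1) 0 0) = q4 * (mk8 0 0 1 (-1) (-2) 0 1 1)) h0 h75
  have h91 : InG (qval (mk8 0 0 (-2) 0 1 1 1 (-1))) := InG_step (by decide : (mk8 2 0 (-1) (-1) 0 0 (-1) 1) * (mk8 (-1) 1 0 0 1 1 2 0) = q4 * (mk8 0 0 (-2) 0 1 1 1 (-1))) h0 h78
  have h92 : InG (qval (mk8 0 0 0 0 0 0 4 0)) := InG_step (by decide : (mk8 (-1) 1 0 0 1 1 2 0) * (mk8 2 0 (-1) (-1) 0 0 (-1) 1) = q4 * (mk8 0 0 0 0 0 0 4 0)) h78 h0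
  have h93 : InG (qval (mk8 0 0 (-2) 0 (-1) (-1) 1 (-1))) := InG_step (by decide : (mk8 2 0 (-1) (-1) 0 0 (-1) 1) * (mk8 (-1) 1 (-2) 0 0 0 (-1) (-1)) = q4 * (mk8 0 0 (-2) 0 (-1) (-1) 1 (-1))) h0 h79
  have h94 : InG (qval (mk8 0 0 0 0 4 0 0 0)) := InG_step (by decide : (mk8 1 1 (-2) 0 (-1) 1 0 0) * (mk8 (-1) 1 0 0 1 1 2 0) = q4 * (mk8 0 0 0 0 4 0 0 0)) h1 h78
  have h95 : InG (qval (mk8 0 0 1 (-1) 2 0 (-1) (-1))) := InG_step (by decide : (mk8 (-1) 1 (-2) 0 0 0 (-1) (-1)) * (mk8 1 1 (-2) 0 (-1) 1 0 0) = q4 * (mk8 0 0 1 (-1) 2 0 (-1) (-1))) h79 h1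
  have h96 : InG (qval (mk8 (-2) 0 (-2) 0 (-2) 0 (-2) 0)) := InG_step (by decide : (mk8 (-2) 0 (-1) (-1) 0 0 (-1) 1) * (mk8 2 0 1 (-1) 1 1 0 0) = q4 * (mk8 (-2) 0 (-2) 0 (-2) 0 (-2) 0)) h2 h72
  have h97 : InG (qval (mk8 (-2) 0 0 0 1 (-1) 1 1)) := InG_step (by decide : (mk8 2 0 1 (-1) 1 1 0 0) * (mk8 (-2) 0 (-1) (-1) 0 0 (-1) 1) = q4 * (mk8 (-2) 0 0 0 1 (-1) 1 1)) h72 h2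
  have h98 : InG (qval (mk8 (-2) 0 1 (-1) (-1) (-1) 0 0)) := InG_step (by decide : (mk8 (-2) 0 (-1) (-1) 0 0 (-1) 1) * (mk8 2 0 (-2) 0 2 0 (-2) 0) = q4 * (mk8 (-2) 0 1 (-1) (-1) (-1) 0 0)) h2 h73
  have h99 : InG (qval (mk8 (-2) 0 0 0 (-1) 1 1 1)) := InG_step (by decide : (mk8 2 0 (-2) 0 2 0 (-2) 0) * (mk8 (-2) 0 (-1) (-1) 0 0 (-1) 1) = q4 * (mk8 (-2) 0 0 0 (-1) 1 1 1)) h73 h2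
  have h100 : InG (qval (mk8 (-2) 0 1 (-1) 1 1 0 0)) := InG_step (by decide : (mk8 2 0 (-2) 0 (-2) 0 (-2) 0) * (mk8 (-2) 0 (-1) (-1) 0 0 (-1) 1) = q4 * (mk8 (-2) 0 1 (-1) 1 1 0 0)) h74 h2
  have h101 : InG (qval (mk8 (-2) 0 (-2) 0 2 0 (-2) 0)) := InG_step (by decide : (mk8 2 0 1 (-1) (-1) (-1) 0 0) * (mk8 (-2) 0 (-1) (-1) 0 0 (-1) 1) = q4 * (mk8 (-2) 0 (-2) 0 2 0 (-2) 0)) h75 h2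
  have h102 : InG (qval (mk8 1 (-1) (-2) 0 0 0 (-1) (-1))) := InG_step (by decide : (mk8 (-2) 0 (-1) (-1) 0 0 (-1) 1) * (mk8 (-1) 1 0 0 1 1 2 0) = q4 * (mk8 1 (-1) (-2) 0 0 0 (-1) (-1))) h2 h78
  have h103 : InG (qval (mk8 1 (-1) 0 0 (-1) (-1) 2 0)) := InG_step (by decide : (mk8 (-1) 1 0 0 1 1 2 0) * (mk8 (-2) 0 (-1) (-1) 0 0 (-1) 1) = q4 * (mk8 1 (-1) 0 0 (-1) (-1) 2 0)) h78 h2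
  have h104 : InG (qval (mk8 1 (-1) 0 0 1 1 2 0)) := InG_step (by decide : (mk8 (-1) 1 (-2) 0 0 0 (-1) (-1)) * (mk8 (-2) 0 (-1) (-1) 0 0 (-1) 1) = q4 * (mk8 1 (-1) 0 0 1 1 2 0)) h79 h2
  have h105 : InG (qval (mk8 0 0 1 (-1) (-2) 0 (-1) (-1))) := InG_step (by decide : (mk8 (-1) 1 0 0 (-1) (-1) 2 0) * (mk8 0 0 (-4) 0 0 0 0 0) = q4 * (mk8 0 0 1 (-1) (-2) 0 (-1) (-1))) h80 h3
  have h106 : InG (qval (mk8 0 0 (-1) 1 2 0 1 1)) := InG_step (by decide : (mk8 0 0 (-1) (-1) (-1) 1 2 0) * (mk8 (-1) 1 0 0 (-1) (-1) 2 0) = q4 * (mk8 0 0 (-1) 1 2 0 1 1)) h4 h80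
  have h107 : InG (qval (mk8 1 (-1) 0 0 1 1 (-2) 0)) := InG_step (by decide : (mk8 (-1) 1 (-1) (-1) 2 0 0 0) * (mk8 (-1) 1 0 0 1 1 2 0) = q4 * (mk8 1 (-1) 0 0 1 1 (-2) 0)) h5 h78
  have h108 : InG (qval (mk8 (-2) 0 2 0 2 0 2 0)) := InG_step (by decide : (mk8 (-4) 0 0 0 0 0 0 0) * (mk8 2 0 (-2) 0 (-2) 0 (-2) 0) = q4 * (mk8 (-2) 0 2 0 2 0 2 0)) h6 h74
  have h109 : InG (qval (mk8 (-2) 0 (-1) 1 1 1 0 0)) := InG_step (by decide : (mk8 (-4) 0 0 0 0 0 0 0) * (mk8 2 0 1 (-1) (-1) (-1) 0 0) = q4 * (mk8 (-2) 0 (-1) 1 1 1 0 0)) h6 h75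
  have h110 : InG (qval (mk8 (-2) 0 0 0 1 (-1) (-1) (-1))) := InG_step (by decide : (mk8 (-4) 0 0 0 0 0 0 0) * (mk8 2 0 0 0 (-1) 1 1 1) = q4 * (mk8 (-2) 0 0 0 1 (-1) (-1) (-1))) h6 h76
  have h111 : InG (qval (mk8 (-2) 0 0 0 (-1) 1 (-1) (-1))) := InG_step (by decide : (mk8 (-4) 0 0 0 0 0 0 0) * (mk8 2 0 0 0 1 (-1) 1 1) = q4 * (mk8 (-2) 0 0 0 (-1) 1 (-1) (-1))) h6 h77
  have h112 : InG (qval (mk8 1 (-1) 0 0 (-1) (-1) (-2) 0)) := InG_step (by decide : (mk8 (-4) 0 0 0 0 0 0 0) * (mk8 (-1) 1 0 0 1 1 2 0) = q4 * (mk8 1 (-1) 0 0 (-1) (-1) (-2) 0)) h6 h78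
  have h113 : InG (qval (mk8 1 (-1) 2 0 0 0 1 1)) := InG_step (by decide : (mk8 (-4) 0 0 0 0 0 0 0) * (mk8 (-1) 1 (-2) 0 0 0 (-1) (-1)) = q4 * (mk8 1 (-1) 2 0 0 0 1 1)) h6 h79
  have h114 : InG (qval (mk8 0 0 0 0 (-4) 0 0 0)) := InG_step (by decide : (mk8 (-1) 1 0 0 1 1 2 0) * (mk8 (-1) (-1) (-2) 0 1 (-1) 0 0) = q4 * (mk8 0 0 0 0 (-4) 0 0 0)) h78 h7
  have h115 : InG (qval (mk8 0 0 (-1) 1 (-2) 0 1 1)) := InG_step (by decide : (mk8 (-1) (-1) 1 (-1) 0 0 2 0) * (mk8 (-1) 1 (-2) 0 0 0 (-1) (-1)) = q4 * (mk8 0 0 (-1) 1 (-2) 0 1 1)) h9 h79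
  have h116 : InG (qval (mk8 0 0 0 0 0 0 (-4) 0)) := InG_step (by decide : (mk8 (-2) 0 (-1) (-1) 0 0 1 (-1)) * (mk8 (-1) 1 0 0 1 1 2 0) = q4 * (mk8 0 0 0 0 0 0 (-4) 0)) h10 h78
  have h117 : InG (qval (mk8 0 0 2 0 1 1 (-1) 1)) := InG_step (by decide : (mk8 (-1) 1 (-2) 0 0 0 (-1) (-1)) * (mk8 (-2) 0 (-2) 0 2 0 2 0) = q4 * (mk8 0 0 2 0 1 1 (-1) 1)) h79 h11
  have h118 : InG (qval (mk8 0 0 2 0 1 1 1 (-1))) := InG_step (by decide : (mk8 (-2) 0 1 1 0 0 1 (-1)) * (mk8 2 0 (-2) 0 (-2) 0 (-2) 0) = q4 * (mk8 0 0 2 0 1 1 1 (-1))) h13 h74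
  have h119 : InG (qval (mk8 0 0 (-1) 1 2 0 (-1) (-1))) := InG_step (by decide : (mk8 (-2) 0 1 1 0 0 1 (-1)) * (mk8 2 0 1 (-1) (-1) (-1) 0 0) = q4 * (mk8 0 0 (-1) 1 2 0 (-1) (-1))) h13 h75
  intro X hX
  simp only [L, List.mem_cons, List.not_mem_nil, or_false] at hX
  rcases hX with rfl|rfl|rfl|rfl|rfl|rfl|rfl|rfl|rfl|rfl|rfl|rfl|rfl|rfl|rfl|rfl|rfl|rfl|rfl|rfl|rfl|rfl|rfl|rfl|rfl|rfl|rfl|rfl|rfl|rfl|rfl|rfl|rfl|rfl|rfl|rfl|rfl|rfl|rfl|rfl|rfl|rfl|rfl|rfl|rfl|rfl|rfl|rfl|rfl|rfl|rfl|rfl|rfl|rfl|rfl|rfl|rfl|rfl|rfl|rfl|rfl|rfl|rfl|rfl|rfl|rfl|rfl|rfl|rfl|rfl|rfl|rfl|rfl|rfl|rfl|rfl|rfl|rfl|rfl|rfl|rfl|rfl|rfl|rfl|rfl|rfl|rfl|rfl|rfl|rfl|rfl|rfl|rfl|rfl|rfl|rfl|rfl|rfl|rfl|rfl|rfl|rf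l|rfl|rfl|rfl|rfl|rfl|rfl|rfl|rfl|rfl|rfl|rfl|rfl|rfl|rfl|rfl|rfl|rfl|rfl
  exacts [h0, h1, h2, h3, h4, h5, h6, h7, h8, h9, h10, h11, h12, h13, h14, h15, h16, h17, h18, h19, h20, h21, h22, h23, h24, h25, h26, h27, h28, h29, h30, h31, h32, h33, h34, h35, h36, h37, h38, h39, h40, h41, h42, h43, h44, h45, h46, h47, h48, h49, h50, h51, h52, h53, h54, h55, h56, h57, h58, h59, h60, h61, h62, h63, h64, h65, h66, h67, h68, h69, h70, h71, h72, h73, h74, h75, h76, h77, h78, h79, h80, h81, h82, h83, h84, h85, h86, h87, h88, h89, h90, h91, h92, h93, h94, h95, h96, h97, h98, h99, h100, h101, h102, h103, h104, h105, h106, h107, h108, h109, h110, h111, h112, h113, h114, h115, h116, h117, h118, h119]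

lemma mem_of_val {u : (ℍ[ℝ])ˣ} (h : InG (u : ℍ[ℝ])) : u ∈ G2I := by
  obtain ⟨w, hw, hv⟩ := h
  rwa [show u = w from Units.ext hv.symm]

/-! ### G2I is contained in the 120-element set -/

def V : Set (ℍ[ℝ])ˣ := {u | ∃ X ∈ L, (u : ℍ[ℝ]) = qval X}

def U : Submonoid (ℍ[ℝ])ˣ where
  carrier := {x | ∀ v ∈ V, x * v ∈ V}
  one_mem' := by intro v hv; rwa [one_mul]
  mul_mem' := fun hx hy v hv => by rw [mul_assoc]; exact hx _ (hy _ hv)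

lemma gen_step {g : ℍ[A]} (hg : ∀ X ∈ L, g * X ∈ L.map (fun z => q4 * z))
    {x : (ℍ[ℝ])ˣ} (hx : (x : ℍ[ℝ]) = qval g) : x ∈ U := by
  rintro v ⟨X, hX, hv⟩
  obtain ⟨Z, hZ, hgz⟩ := List.mem_map.mp (hg X hX)
  exact ⟨Z, hZ, by rw [Units.val_mul, hx, hv, qval_mul_eq hgz.symm]⟩

lemma mem_U {u : (ℍ[ℝ])ˣ} (hu : u ∈ G2I) : u ∈ U := by
  have h1 : u ∈ Submonoid.closure
      ({u : (ℍ[ℝ])ˣ | (u : ℍ[ℝ]) = a₁ * a₂ ∨ (u : ℍ[ℝ]) = a₂ * a₃} ∪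
       {u : (ℍ[ℝ])ˣ | (u : ℍ[ℝ]) = a₁ * a₂ ∨ (u : ℍ[ℝ]) = a₂ * a₃}⁻¹) := by
    rw [← Subgroup.closure_toSubmonoid]; exact hu
  refine Submonoid.closure_le.mpr ?_ h1
  rintro x (hx | hx)
  · rcases hx with h | h
    · exact gen_step dec2a (h.trans val_g1)
    · exact gen_step dec2b (h.trans val_g2)
  · rw [Set.mem_inv] at hx
    rcases hx with h | h
    · have hxe : x = gu1⁻¹ := by
        rw [← inv_inv x, show x⁻¹ = gu1 from Units.ext (h.trans val_g1)]
      exact gen_step dec2c (by rw [hxe]; rfl)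
    · have hxe : x = gu2⁻¹ := by
        rw [← inv_inv x, show x⁻¹ = gu2 from Units.ext (h.trans val_g2)]
      exact gen_step dec2d (by rw [hxe]; rfl)

lemma val_of_mem {u : (ℍ[ℝ])ˣ} (hu : u ∈ G2I) : ∃ X ∈ L, (u : ℍ[ℝ]) = qval X := by
  have h1 : (1 : (ℍ[ℝ])ˣ) ∈ V := ⟨q4, dec7, by rw [Units.val_one, qval_one]⟩
  have := mem_U hu 1 h1
  rwa [mul_one] at this

/-! ### The nine conjugacy classes -/

def repU (i : Fin 9) : G2I :=
  ⟨mkUnit (Rs.getD ↑i q0) (dec1 _ (dec6 i)).1 (dec1 _ (dec6 i)).2,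
    mem_of_val (L_mem _ (dec6 i))⟩

def cc (i : Fin 9) : ConjClasses G2I := ConjClasses.mk (repU i)

lemma re_conj (c a : (ℍ[ℝ])ˣ) : ((↑(c * a * c⁻¹) : ℍ[ℝ])).re = ((a : ℍ[ℝ])).re := by
  rw [Units.val_mul, Units.val_mul, re_comm, ← mul_assoc, Units.inv_mul, one_mul]

lemma cc_injective : Function.Injective cc := by
  intro i j h
  by_contra hne
  obtain ⟨c, hc⟩ := isConj_iff.mp (ConjClasses.mk_eq_mk_iff_isConj.mp h)
  have hval : ((↑(↑(c * repU i * c⁻¹) : (ℍ[ℝ])ˣ) : ℍ[ℝ])).re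
      = ((↑(↑(repU j) : (ℍ[ℝ])ˣ) : ℍ[ℝ])).re := by rw [hc]
  have h2 : (qval (Rs.getD ↑i q0)).re = (qval (Rs.getD ↑j q0)).re := by
    have h3 : (↑(c * repU i * c⁻¹) : (ℍ[ℝ])ˣ) = ↑c * ↑(repU i) * (↑c)⁻¹ := rfl
    rw [h3, re_conj] at hval
    exact hval
  rw [qval_re, qval_re] at h2
  have h4 := φ_inj (mul_left_cancel₀ (by norm_num : (4:ℝ)⁻¹ ≠ 0) h2)
  exact dec5 i j hne h4

lemma cc_surjective : Function.Surjective cc := by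
  intro x
  obtain ⟨g, rfl⟩ := ConjClasses.mk_surjective x
  obtain ⟨X, hX, hval⟩ := val_of_mem g.2
  obtain ⟨n, hn, hXn⟩ := List.mem_iff_getElem.mp hX
  have hn120 : n < 120 := dec_len ▸ hn
  refine ⟨⟨Is.getD n 0, dec4c ⟨n, hn120⟩⟩, ?_⟩
  rw [cc, ConjClasses.mk_eq_mk_iff_isConj]
  have hCL : Cs.getD n q0 ∈ L := dec4b ⟨n, hn120⟩
  refine isConj_iff.mpr ⟨⟨mkUnit (Cs.getD n q0) (dec1 _ hCL).1 (dec1 _ hCL).2,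
    mem_of_val (L_mem _ hCL)⟩, ?_⟩
  rw [mul_inv_eq_iff_eq_mul]
  apply Subtype.ext
  apply Units.ext
  show qval (Cs.getD n q0) * qval (Rs.getD (Is.getD n 0) q0)
      = ((g : (ℍ[ℝ])ˣ) : ℍ[ℝ]) * qval (Cs.getD n q0)
  have hsemi : Cs.getD n q0 * Rs.getD (Is.getD n 0) q0 = X * Cs.getD n q0 := by
    have h5 := dec4 ⟨n, hn120⟩
    rwa [show (L.getD n q0) = X from (List.getD_eq_getElem L q0 hn).trans hXn] at h5
  rw [hval, qval_mul_eq₂ hsemi]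

/-- The binary icosahedral group `2I` has exactly 9 conjugacy classes. -/
theorem binary_icosahedral_conjClasses : Nat.card (ConjClasses G2I) = 9 := by
  rw [← Nat.card_eq_of_bijective cc ⟨cc_injective, cc_surjective⟩]
  simp
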